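/- Let A, B, C be 4-tuples of positive integers written as columns (a_{++}, a_{+-}, a_{-+}, a_{--}), (b_{-+}, b_{--}, b_{+-}, b_{++}), (c_{--}, c_{++}, c_{-+}, c_{+-}) satisfying the three relations a_{++}a_{+-}b_{++}b_{+-} - a_{-+}a_{--}b_{-+}b_{--} = 1, a_{++}a_{-+}c_{++}c_{+-} - a_{+-}a_{--}c_{-+}c_{--} = 1, b_{++}b_{-+}c_{++}c_{-+} - b_{+-}b_{--}c_{+-}c_{--} = 1. Define d1 = a_{-+}b_{--}c_{+-} + a_{+-}b_{++}c_{-+}, d2 = a_{--}b_{-+}c_{-+} + a_{++}b_{+-}c_{+-}, d3 = a_{++}b_{++}c_{++} + a_{--}b_{--}c_{--}, d4 = a_{+-}b_{+-}c_{--} + a_{-+}b_{-+}c_{++}. Then c_{-+}c_{+-}d3*d4 - c_{--}c_{++}d1*d2 = 1, a_{+-}a_{-+}d2*d3 - a_{++}a_{--}d1*d4 = 1, and b_{-+}b_{+-}d1*d3 - b_{--}b_{++}d2*d4 = 1. -/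
import Mathlib


theorem stmt_16 (app apm amp amm bpp bpm bmp bmm cpp cpm cmp cmm : ℤ)
    (h1 : 0 < app) (h2 : 0 < apm) (h3 : 0 < amp) (h4 : 0 < amm)
    (h5 : 0 < bpp) (h6 : 0 < bpm) (h7 : 0 < bmp) (h8 : 0 < bmm)
    (h9 : 0 < cpp) (h10 : 0 < cpm) (h11 : 0 < cmp) (h12 : 0 < cmm)
    (rab : app*apm*bpp*bpm - amp*amm*bmp*bmm = 1)
    (rac : app*amp*cpp*cpm - apm*amm*cmp*cmm = 1)
    (rbc : bpp*bmp*cpp*cmp - bpm*bmm*cpm*cmm = 1) :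
    let d1 := amp*bmm*cpm + apm*bpp*cmp
    let d2 := amm*bmp*cmp + app*bpm*cpm
    let d3 := app*bpp*cpp + amm*bmm*cmm
    let d4 := apm*bpm*cmm + amp*bmp*cpp
    cmp*cpm*d3*d4 - cmm*cpp*d1*d2 = 1 ∧
    apm*amp*d2*d3 - app*amm*d1*d4 = 1 ∧
    bmp*bpm*d1*d3 - bmm*bpp*d2*d4 = 1 := by
  refine ⟨?_, ?_, ?_⟩
  · linear_combination (bpp*bmp*cpp*cmp - bpm*bmm*cpm*cmm) * rac + rbc
  · linear_combination (app*amp*cpp*cpm - apm*amm*cmp*cmm) * rab + rac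
  · linear_combination (bpp*bmp*cpp*cmp - bpm*bmm*cpm*cmm) * rab + rbc
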